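/- Let (R, m) be a local ring and suppose the Syzygy Theorem holds over R̄ = R/(x) for some x ∈ m. Let M be a weakly liftable R̄-module whose syzygies over R̄ satisfy rank Syz_j^{R̄}(M) ≥ j whenever Syz_j^{R̄}(M) is not free. If the syzygy sequences 0 → Syz_{k-1}^{R̄}(M) → Syz_k^R(M)/x → Syz_k^{R̄}(M) → 0 split for all relevant k, then rank_R Syz_k^R(M) ≥ 2k − 1 for 2 ≤ k ≤ pd_R M − 2. -/

import Mathlib

open CategoryTheory IsLocalRing

/-- A minimal free resolution `⋯ → F₁ → F₀ → M → 0` of a module `M`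
over a local ring `R`. -/
structure MinFreeRes (R : Type) [CommRing R] [IsLocalRing R]
    (M : Type) [AddCommGroup M] [Module R M] : Type 1 where
  F : ℕ → ModuleCat R
  d : ∀ n, F (n + 1) ⟶ F n
  aug : F 0 ⟶ ModuleCat.of R M
  free : ∀ n, Module.Free R (F n)
  fin : ∀ n, Module.Finite R (F n)
  aug_surj : Function.Surjective aug
  exact_aug : Function.Exact (d 0) aug
  exact : ∀ n, Function.Exact (d (n + 1)) (d n)
  min_aug : LinearMap.ker aug.hom ≤ (maximalIdeal R) • (⊤ : Submodule R (F 0))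
  min : ∀ n, LinearMap.range (d n).hom ≤ (maximalIdeal R) • (⊤ : Submodule R (F n))

/-- `res.syz k` is the `(k+1)`-st syzygy module: the paper's `Syz_k(M)` is
`res.syz (k-1)` for `k ≥ 1`. -/
def MinFreeRes.syz {R : Type} [CommRing R] [IsLocalRing R]
    {M : Type} [AddCommGroup M] [Module R M] (res : MinFreeRes R M) :
    ∀ k : ℕ, Submodule R (res.F k)
  | 0 => LinearMap.ker res.aug.hom
  | (k + 1) => LinearMap.ker (res.d k).hom

/-- `M` is weakly liftable along `x`: a direct summand of some `L/xL` with `x` a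
non-zerodivisor on `L`. -/
structure WeakLifting (R : Type) [CommRing R] (x : R)
    (M : Type) [AddCommGroup M] [Module R M] : Type 1 where
  L : Type
  [acg : AddCommGroup L]
  [mod : Module R L]
  reg : ∀ l : L, x • l = 0 → l = 0
  incl : M →ₗ[R] (L ⧸ (Ideal.span {x} • (⊤ : Submodule R L)))
  proj : (L ⧸ (Ideal.span {x} • (⊤ : Submodule R L))) →ₗ[R] M
  split : proj.comp incl = LinearMap.id

attribute [instance] WeakLifting.acg WeakLifting.mod

/-! ### Auxiliary lemmas -/

section Aux

variable {R : Type} [CommRing R]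

lemma aux_mk_smul_quot (I : Ideal R) {N : Type} [AddCommGroup N] [Module R N] (r : R)
    (z : N ⧸ (I • ⊤ : Submodule R N)) : (Ideal.Quotient.mk I r) • z = r • z := by
  obtain ⟨m, rfl⟩ := Submodule.Quotient.mk_surjective _ z
  rfl

instance aux_tower (I : Ideal R) (N : Type) [AddCommGroup N] [Module R N] :
    IsScalarTower R (R ⧸ I) (N ⧸ (I • ⊤ : Submodule R N)) := by
  constructor
  intro r q z
  obtain ⟨s, rfl⟩ := Ideal.Quotient.mk_surjective q
  have h1 : r • (Ideal.Quotient.mk I s) = Ideal.Quotient.mk I (r * s) := rfl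
  rw [h1, aux_mk_smul_quot, aux_mk_smul_quot, mul_smul]

/-- Promote an `R`-linear map between quotients by `I` to an `R/I`-linear map. -/
def barify (I : Ideal R) {A B : Type} [AddCommGroup A] [Module R A]
    [AddCommGroup B] [Module R B]
    (f : (A ⧸ (I • ⊤ : Submodule R A)) →ₗ[R] (B ⧸ (I • ⊤ : Submodule R B))) :
    (A ⧸ (I • ⊤ : Submodule R A)) →ₗ[R ⧸ I] (B ⧸ (I • ⊤ : Submodule R B)) where
  toFun := f
  map_add' := map_add f
  map_smul' q z := by
    obtain ⟨r, rfl⟩ := Ideal.Quotient.mk_surjective q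
    simp only [RingHom.id_apply, aux_mk_smul_quot, map_smul]

@[simp] lemma barify_apply (I : Ideal R) {A B : Type} [AddCommGroup A] [Module R A]
    [AddCommGroup B] [Module R B]
    (f : (A ⧸ (I • ⊤ : Submodule R A)) →ₗ[R] (B ⧸ (I • ⊤ : Submodule R B))) (z) :
    barify I f z = f z := rfl

/-- If a surjection splits and has small finitely generated kernel, the kernel vanishes. -/
lemma ker_eq_bot_of_section {A : Type} [CommRing A] {P Q : Type}
    [AddCommGroup P] [Module A P] [AddCommGroup Q] [Module A Q]
    (φ : P →ₗ[A] Q) (s : Q →ₗ[A] P) (hs : φ ∘ₗ s = LinearMap.id)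
    (J : Ideal A) (hJ : J ≤ Ideal.jacobson ⊥)
    (hfg : (LinearMap.ker φ).FG)
    (hk : LinearMap.ker φ ≤ J • (⊤ : Submodule A P)) :
    LinearMap.ker φ = ⊥ := by
  have hsec : ∀ w : Q, φ (s w) = w := fun w => LinearMap.congr_fun hs w
  have hsup : LinearMap.ker φ ⊔ LinearMap.range s = ⊤ := by
    rw [eq_top_iff]
    intro y _
    have h1 : y - s (φ y) ∈ LinearMap.ker φ := by
      rw [LinearMap.mem_ker, map_sub, hsec, sub_self]
    exact Submodule.mem_sup.mpr ⟨_, h1, s (φ y), ⟨φ y, rfl⟩, by abel⟩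
  have hle : LinearMap.ker φ ≤ J • LinearMap.ker φ := by
    intro z hz
    have hz' : z ∈ J • (LinearMap.ker φ) ⊔ J • LinearMap.range s := by
      rw [← Submodule.smul_sup, hsup]; exact hk hz
    obtain ⟨a, ha, b, hb, hab⟩ := Submodule.mem_sup.mp hz'
    have haker : a ∈ LinearMap.ker φ := Submodule.smul_le_right ha
    have hbrange : b ∈ LinearMap.range s := Submodule.smul_le_right hb
    obtain ⟨w, rfl⟩ := hbrange
    have hw : w = 0 := by
      have h2 : φ (a + s w) = 0 := by rw [hab]; exact hz
      rw [map_add, LinearMap.mem_ker.mp haker, zero_add, hsec] at h2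
      exact h2
    rw [hw, map_zero, add_zero] at hab
    rw [← hab]; exact ha
  exact Submodule.eq_bot_of_le_smul_of_le_jacobson_bot J _ hfg hle hJ

/-- A non-zerodivisor acts regularly on any free module. -/
lemma reg_of_free {x : R} (hx : x ∈ nonZeroDivisors R)
    {F : Type} [AddCommGroup F] [Module R F] [Module.Free R F] :
    ∀ v : F, x • v = 0 → v = 0 := by
  intro v hv
  classical
  set b := Module.Free.chooseBasis R F
  have h2 : b.repr (x • v) = 0 := by rw [hv, map_zero]
  rw [map_smul] at h2
  have h3 : b.repr v = 0 := by
    ext i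
    have h4 := DFunLike.congr_fun h2 i
    rw [Finsupp.smul_apply, smul_eq_mul] at h4
    have h5 : b.repr v i * x = 0 := by rw [mul_comm]; exact h4
    simpa using hx.2 _ h5
  have := b.repr.map_eq_zero_iff.mp h3
  exact this

/-- A non-zerodivisor acts regularly on any submodule of a free module. -/
lemma reg_of_submodule_free {x : R} (hx : x ∈ nonZeroDivisors R)
    {F : Type} [AddCommGroup F] [Module R F] [Module.Free R F] (N : Submodule R F) :
    ∀ v : N, x • v = 0 → v = 0 := by
  intro v hv
  have h1 : x • (v : F) = 0 := by
    have := congrArg (Subtype.val) hv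
    simpa using this
  exact Subtype.ext (reg_of_free hx _ h1)

end Aux

/-! ### The key kernel lemma -/

/-- If `φ : F ↠ N` is a minimal surjection (kernel inside `m•F`), `x` is a regular
nonunit acting regularly on `N`, and `N/xN` is free over `R/(x)`, then `ker φ = 0`. -/
lemma ker_eq_bot_of_quot_free
    {R : Type} [CommRing R] [IsNoetherianRing R] [IsLocalRing R]
    {x : R} (hxm : x ∈ maximalIdeal R) (hx : x ∈ nonZeroDivisors R)
    [IsLocalRing (R ⧸ Ideal.span {x})]
    {F N : Type} [AddCommGroup F] [Module R F] [Module.Finite R F]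
    [AddCommGroup N] [Module R N]
    (hreg : ∀ v : N, x • v = 0 → v = 0)
    (φ : F →ₗ[R] N) (hφ : Function.Surjective φ)
    (hker : LinearMap.ker φ ≤ (maximalIdeal R) • (⊤ : Submodule R F))
    (hfree : Module.Free (R ⧸ Ideal.span {x})
      (N ⧸ ((Ideal.span {x} : Ideal R) • (⊤ : Submodule R N)))) :
    LinearMap.ker φ = ⊥ := by
  classical
  set I : Ideal R := Ideal.span {x} with hIdef
  have hIm : I ≤ maximalIdeal R := Ideal.span_le.mpr (Set.singleton_subset_iff.mpr hxm)
  have hjac : maximalIdeal R ≤ Ideal.jacobson ⊥ :=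
    le_of_eq (jacobson_eq_maximalIdeal ⊥ bot_ne_top).symm
  have hcomap : (I • ⊤ : Submodule R F) ≤ Submodule.comap φ (I • ⊤ : Submodule R N) := by
    rw [← Submodule.map_le_iff_le_comap, Submodule.map_smul'']
    exact Submodule.smul_mono le_rfl le_top
  set ψ0 : (F ⧸ (I • ⊤ : Submodule R F)) →ₗ[R] (N ⧸ (I • ⊤ : Submodule R N)) :=
    Submodule.mapQ _ _ φ hcomap with hψ0def
  set ψ := barify I ψ0 with hψdef
  have hψ : ∀ f : F, ψ (Submodule.Quotient.mk f) = Submodule.Quotient.mk (φ f) := by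
    intro f
    simp [hψdef, hψ0def, Submodule.mapQ_apply]
  have hψs : Function.Surjective ψ := by
    intro q
    obtain ⟨n, rfl⟩ := Submodule.Quotient.mk_surjective _ q
    obtain ⟨f, rfl⟩ := hφ n
    exact ⟨Submodule.Quotient.mk f, hψ f⟩
  haveI : Module.Projective (R ⧸ I) (N ⧸ (I • ⊤ : Submodule R N)) := by
    haveI := hfree; infer_instance
  obtain ⟨s, hs⟩ := Module.projective_lifting_property ψ LinearMap.id hψs
  -- image of maximal ideal is in the maximal ideal of the quotient
  have hmax : ∀ a : R, a ∈ maximalIdeal R →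
      Ideal.Quotient.mk I a ∈ maximalIdeal (R ⧸ I) := by
    intro a ha
    rw [mem_maximalIdeal, mem_nonunits_iff]
    intro hu
    obtain ⟨b, hb⟩ := hu.exists_right_inv
    obtain ⟨c, rfl⟩ := Ideal.Quotient.mk_surjective b
    rw [← map_mul] at hb
    have hmem : a * c - 1 ∈ I := by
      have := Ideal.Quotient.eq.mp (hb.trans (map_one (Ideal.Quotient.mk I)).symm)
      simpa using this
    have h1 : (1 : R) ∈ maximalIdeal R := by
      have h2 : a * c - (a * c - 1) ∈ maximalIdeal R :=
        Submodule.sub_mem _ (Ideal.mul_mem_right _ _ ha) (hIm hmem)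
      simpa using h2
    exact absurd isUnit_one (mem_nonunits_iff.mp ((mem_maximalIdeal 1).mp h1))
  have hkerψ : LinearMap.ker ψ ≤
      (maximalIdeal (R ⧸ I)) • (⊤ : Submodule (R ⧸ I) (F ⧸ (I • ⊤ : Submodule R F))) := by
    intro z hz
    obtain ⟨f, rfl⟩ := Submodule.Quotient.mk_surjective _ z
    have hf : φ f ∈ (I • ⊤ : Submodule R N) := by
      have h3 : ψ (Submodule.Quotient.mk f) = 0 := hz
      rw [hψ] at h3
      exact (Submodule.Quotient.mk_eq_zero _).mp h3
    have hmap : (I • ⊤ : Submodule R N) = Submodule.map φ (I • ⊤ : Submodule R F) := by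
      rw [Submodule.map_smul'', Submodule.map_top, LinearMap.range_eq_top.mpr hφ]
    rw [hmap] at hf
    obtain ⟨g, hg, hgf⟩ := hf
    have hfg : f - g ∈ LinearMap.ker φ := by
      rw [LinearMap.mem_ker, map_sub, hgf, sub_self]
    have hz2 : (Submodule.Quotient.mk f : F ⧸ (I • ⊤ : Submodule R F)) =
        Submodule.Quotient.mk (f - g) := by
      rw [Submodule.Quotient.eq]
      simpa using hg
    rw [hz2]
    have hw := hker hfg
    refine Submodule.smul_induction_on hw ?_ ?_
    · intro a ha u _
      have h4 : (Submodule.Quotient.mk (a • u) : F ⧸ (I • ⊤ : Submodule R F)) =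
          (Ideal.Quotient.mk I a) • (Submodule.Quotient.mk u) := by
        rw [aux_mk_smul_quot]
        exact (Submodule.Quotient.mk_smul _ _ _)
      rw [h4]
      exact Submodule.smul_mem_smul (hmax a ha) trivial
    · intro u v hu hv
      have h5 : (Submodule.Quotient.mk (u + v) : F ⧸ (I • ⊤ : Submodule R F)) =
          Submodule.Quotient.mk u + Submodule.Quotient.mk v := by
        rw [Submodule.Quotient.mk_add]
      rw [h5]
      exact Submodule.add_mem _ hu hv
  haveI : Module.Finite R (F ⧸ (I • ⊤ : Submodule R F)) :=
    Module.Finite.of_surjective (Submodule.mkQ _) (Submodule.Quotient.mk_surjective _)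
  haveI : Module.Finite (R ⧸ I) (F ⧸ (I • ⊤ : Submodule R F)) :=
    Module.Finite.of_restrictScalars_finite R _ _
  have hJb : maximalIdeal (R ⧸ I) ≤ Ideal.jacobson ⊥ :=
    le_of_eq (jacobson_eq_maximalIdeal ⊥ bot_ne_top).symm
  have hbotψ : LinearMap.ker ψ = ⊥ :=
    ker_eq_bot_of_section ψ s hs _ hJb (IsNoetherian.noetherian _) hkerψ
  have hk1 : LinearMap.ker φ ≤ (I • ⊤ : Submodule R F) := by
    intro z hz
    have h6 : ψ (Submodule.Quotient.mk z) = 0 := by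
      rw [hψ, LinearMap.mem_ker.mp hz]
      simp
    have h7 : (Submodule.Quotient.mk z : F ⧸ (I • ⊤ : Submodule R F)) ∈ LinearMap.ker ψ := h6
    rw [hbotψ, Submodule.mem_bot] at h7
    exact (Submodule.Quotient.mk_eq_zero _).mp h7
  have hk2 : LinearMap.ker φ ≤ I • (LinearMap.ker φ) := by
    intro z hz
    have hz1 := hk1 hz
    have hsub : (I • (⊤ : Submodule R F)) ≤
        LinearMap.range (x • (LinearMap.id : F →ₗ[R] F)) := by
      refine Submodule.smul_le.mpr ?_
      intro r hr f _
      obtain ⟨u, hu⟩ := Ideal.mem_span_singleton'.mp hr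
      refine ⟨u • f, ?_⟩
      rw [LinearMap.smul_apply, LinearMap.id_apply, smul_smul, mul_comm x u, hu]
    obtain ⟨f, hf⟩ := hsub hz1
    have hf' : x • f = z := by simpa using hf
    have h8 : φ f = 0 := by
      apply hreg
      rw [← map_smul, hf']
      exact LinearMap.mem_ker.mp hz
    rw [← hf']
    exact Submodule.smul_mem_smul (Ideal.mem_span_singleton_self x) (LinearMap.mem_ker.mpr h8)
  exact Submodule.eq_bot_of_le_smul_of_le_jacobson_bot I _ (IsNoetherian.noetherian _) hk2
    (le_trans hIm hjac)

/-! ### Lifting linear independence (and ranks) along `N → N/xN` -/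

lemma rank_quot_le
    {R : Type} [CommRing R] [IsNoetherianRing R] [IsLocalRing R]
    {x : R} (hx : x ∈ nonZeroDivisors R) (hxu : ¬IsUnit x)
    {N : Type} [AddCommGroup N] [Module R N]
    (hreg : ∀ v : N, x • v = 0 → v = 0) :
    Module.rank (R ⧸ Ideal.span {x})
      (N ⧸ ((Ideal.span {x} : Ideal R) • (⊤ : Submodule R N))) ≤ Module.rank R N := by
  classical
  set I : Ideal R := Ideal.span {x} with hIdef
  have hItop : I ≠ ⊤ := fun h => hxu (Ideal.span_singleton_eq_top.mp h)
  rw [Module.rank_def (R ⧸ I) (N ⧸ (I • ⊤ : Submodule R N))]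
  refine ciSup_le' ?_
  rintro ⟨s, hs⟩
  choose n hn using fun (q : s) =>
    Submodule.Quotient.mk_surjective (I • ⊤ : Submodule R N) (q : _)
  have hmk : ∀ (l : s →₀ R),
      Submodule.mkQ (I • ⊤ : Submodule R N) (Finsupp.linearCombination R n l) =
        Finsupp.linearCombination (R ⧸ I) ((↑) : s → _)
          (l.mapRange (Ideal.Quotient.mk I) (map_zero _)) := by
    intro l
    induction l using Finsupp.induction_linear with
    | zero => simp
    | add f g hf hg =>
        rw [map_add, map_add, Finsupp.mapRange_add (map_add _), map_add, hf, hg]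
    | single a b =>
        rw [Finsupp.mapRange_single, Finsupp.linearCombination_single,
          Finsupp.linearCombination_single, map_smul, aux_mk_smul_quot]
        congr 1
        exact hn a
  have key : ∀ j : ℕ, ∀ l : s →₀ R, Finsupp.linearCombination R n l = 0 →
      ∀ i, l i ∈ I ^ j := by
    intro j
    induction j with
    | zero => intro l _ i; simp [pow_zero, Ideal.one_eq_top]
    | succ j ih =>
      intro l hl i
      have hcoef : ∀ i, l i ∈ I := by
        have h0 := hmk l
        rw [hl, map_zero] at h0
        have h1 := linearIndependent_iff.mp hs _ h0.symm
        intro i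
        have h2 : (l.mapRange (Ideal.Quotient.mk I) (map_zero _)) i = 0 := by rw [h1]; rfl
        rwa [Finsupp.mapRange_apply, Ideal.Quotient.eq_zero_iff_mem] at h2
      have hex : ∀ r : R, r ∈ I → ∃ u, r = x * u := by
        intro r hr
        obtain ⟨u, hu⟩ := Ideal.mem_span_singleton'.mp hr
        exact ⟨u, by rw [← hu, mul_comm]⟩
      have hg0 : (fun r : R => if h : ∃ u, r = x * u then h.choose else 0) 0 = 0 := by
        have h : ∃ u, (0 : R) = x * u := ⟨0, by ring⟩
        simp only [dif_pos h]
        have h9 := h.choose_spec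
        have h10 : h.choose * x = 0 := by rw [mul_comm, ← h9]
        exact hx.2 _ h10
      set c := l.mapRange (fun r : R => if h : ∃ u, r = x * u then h.choose else 0) hg0
        with hcdef
      have hxc : ∀ i, l i = x * c i := by
        intro i
        rw [hcdef, Finsupp.mapRange_apply]
        rw [dif_pos (hex _ (hcoef i))]
        exact (hex _ (hcoef i)).choose_spec
      have hlc : l = x • c := by
        ext i
        rw [Finsupp.smul_apply, smul_eq_mul]
        exact hxc i
      have hc0 : Finsupp.linearCombination R n c = 0 := by
        apply hreg
        rw [← map_smul, ← hlc, hl]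
      have h11 := ih c hc0 i
      rw [hxc i, pow_succ, mul_comm x (c i)]
      exact Ideal.mul_mem_mul h11 (Ideal.mem_span_singleton_self x)
  have hind : LinearIndependent R n := by
    rw [linearIndependent_iff]
    intro l hl
    ext i
    have h12 : l i ∈ ⨅ j : ℕ, I ^ j :=
      (Submodule.mem_iInf _).mpr fun j => key j l hl i
    have h13 : (⨅ j : ℕ, I ^ j) = ⊥ := Ideal.iInf_pow_eq_bot_of_isLocalRing _ hItop
    rw [h13, Submodule.mem_bot] at h12
    simp [h12]
  exact hind.cardinal_le_rank

/-! ### Lemmas about minimal free resolutions -/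

namespace MinFreeRes

variable {A : Type} [CommRing A] [IsLocalRing A]
variable {M : Type} [AddCommGroup M] [Module A M]

lemma range_d (res : MinFreeRes A M) (j : ℕ) :
    LinearMap.range (res.d j).hom = res.syz j := by
  cases j with
  | zero => exact (LinearMap.exact_iff.mp res.exact_aug).symm
  | succ n => exact (LinearMap.exact_iff.mp (res.exact n)).symm

lemma subsingleton_of_top_le_smul {P : Type} [AddCommGroup P] [Module A P]
    [Module.Finite A P]
    (h : (⊤ : Submodule A P) ≤ (maximalIdeal A) • ⊤) : Subsingleton P := by
  have hbot : (⊤ : Submodule A P) = ⊥ :=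
    Submodule.eq_bot_of_le_smul_of_le_jacobson_bot (maximalIdeal A) ⊤
      Module.Finite.fg_top h (le_of_eq (jacobson_eq_maximalIdeal ⊥ bot_ne_top).symm)
  constructor
  intro a b
  have ha : a ∈ (⊥ : Submodule A P) := hbot ▸ Submodule.mem_top
  have hb : b ∈ (⊥ : Submodule A P) := hbot ▸ Submodule.mem_top
  rw [Submodule.mem_bot] at ha hb
  rw [ha, hb]

lemma subsingleton_of_ker_top [IsNoetherianRing A] (res : MinFreeRes A M) (i : ℕ)
    (h : LinearMap.ker (res.d i).hom = ⊤) : Subsingleton (res.F (i + 1)) := by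
  haveI := res.fin (i + 1)
  apply subsingleton_of_top_le_smul (A := A)
  have h1 : LinearMap.range (res.d (i + 1)).hom = (⊤ : Submodule A (res.F (i + 1))) :=
    (LinearMap.exact_iff.mp (res.exact i)).symm.trans h
  exact le_trans (le_of_eq h1.symm) (res.min (i + 1))

lemma subsingleton_later [IsNoetherianRing A] (res : MinFreeRes A M) (j : ℕ)
    (h : res.syz (j + 1) = ⊥) : ∀ i, j + 2 ≤ i → Subsingleton (res.F i) := by
  have base : Subsingleton (res.F (j + 2)) := by
    apply res.subsingleton_of_ker_top (j + 1)
    have h0 : LinearMap.range (res.d (j + 1)).hom = ⊥ := by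
      rw [res.range_d (j + 1)]; exact h
    rw [LinearMap.range_eq_bot] at h0
    rw [LinearMap.ker_eq_top]
    exact h0
  have step : ∀ t : ℕ, Subsingleton (res.F (j + 2 + t)) := by
    intro t
    induction t with
    | zero => exact base
    | succ t ih =>
      apply res.subsingleton_of_ker_top (j + 2 + t)
      ext z
      simp only [LinearMap.mem_ker, Submodule.mem_top, iff_true]
      exact Subsingleton.elim _ _
  intro i hi
  have : i = j + 2 + (i - (j + 2)) := by omega
  rw [this]
  exact step _

/-- If a syzygy in a minimal free resolution is free, the next syzygy vanishes. -/
lemma syz_succ_eq_bot_of_free [IsNoetherianRing A] (res : MinFreeRes A M) (j : ℕ)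
    (hfree : Module.Free A (res.syz j)) : res.syz (j + 1) = ⊥ := by
  have hrange : LinearMap.range (res.d j).hom = res.syz j := res.range_d j
  set φ : (res.F (j + 1)) →ₗ[A] (res.syz j) :=
    LinearMap.codRestrict _ (res.d j).hom (fun c => hrange ▸ LinearMap.mem_range_self _ c)
      with hφdef
  have hφs : Function.Surjective φ := by
    rintro ⟨y, hy⟩
    rw [← hrange] at hy
    obtain ⟨z, hz⟩ := hy
    exact ⟨z, Subtype.ext hz⟩
  haveI : Module.Projective A (res.syz j) := by haveI := hfree; infer_instance
  obtain ⟨s, hs⟩ := Module.projective_lifting_property φ LinearMap.id hφs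
  haveI := res.fin (j + 1)
  have hker : LinearMap.ker φ ≤ (maximalIdeal A) • (⊤ : Submodule A (res.F (j + 1))) := by
    rw [hφdef, LinearMap.ker_codRestrict]
    calc LinearMap.ker (res.d j).hom = LinearMap.range (res.d (j + 1)).hom :=
          LinearMap.exact_iff.mp (res.exact j)
      _ ≤ _ := res.min (j + 1)
  have hbot : LinearMap.ker φ = ⊥ :=
    ker_eq_bot_of_section φ s hs _
      (le_of_eq (jacobson_eq_maximalIdeal ⊥ bot_ne_top).symm)
      (IsNoetherian.noetherian _) hker
  rw [hφdef, LinearMap.ker_codRestrict] at hbot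
  exact hbot

end MinFreeRes

/-- Let `(R,m)` be a Noetherian local ring, `x ∈ m` a non-zerodivisor and
non-unit, `R̄ = R/(x)`, and `M` a weakly liftable `R̄`-module whose syzygies over `R̄`
satisfy `rank Syz_j^{R̄}(M) ≥ j` whenever `Syz_j^{R̄}(M)` is not free (the Syzygy Theorem
over `R̄`).  If the syzygy sequences `0 → Syz_{k-1}^{R̄} → Syz_k^R/x → Syz_k^{R̄} → 0`
split, then `rank_R Syz_k^R(M) ≥ 2k − 1` for `2 ≤ k ≤ pd_R M − 2`. -/
theorem stmt11 (R : Type) [CommRing R] [IsNoetherianRing R] [IsLocalRing R]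
    (x : R) (hxm : x ∈ maximalIdeal R) (hx : x ∈ nonZeroDivisors R) (hxu : ¬IsUnit x)
    [IsLocalRing (R ⧸ Ideal.span {x})]
    (M : Type) [AddCommGroup M] [Module R M] [Module.Finite R M]
    [Module (R ⧸ Ideal.span {x}) M] [IsScalarTower R (R ⧸ Ideal.span {x}) M]
    (hwl : Nonempty (WeakLifting R x M))
    (res : MinFreeRes R M) (resb : MinFreeRes (R ⧸ Ideal.span {x}) M)
    (p : ℕ) (hlen : ∀ k : ℕ, p < k → Subsingleton (res.F k))
    (htop : Nontrivial (res.F p))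
    (hsyzb : ∀ j : ℕ, 1 ≤ j → ¬ Module.Free (R ⧸ Ideal.span {x}) (resb.syz (j - 1)) →
      (j : Cardinal) ≤ Module.rank (R ⧸ Ideal.span {x}) (resb.syz (j - 1)))
    (hsplit : ∀ k : ℕ, 2 ≤ k → k ≤ p - 1 →
      Nonempty
        (((res.syz (k - 1)) ⧸
            ((Ideal.span {x} : Ideal R) • (⊤ : Submodule R (res.syz (k - 1)))))
          ≃ₗ[R ⧸ Ideal.span {x}]
         ((resb.syz (k - 2)) × (resb.syz (k - 1))))) :
    ∀ k : ℕ, 2 ≤ k → k ≤ p - 2 →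
      ((2 * k - 1 : ℕ) : Cardinal) ≤ Module.rank R (res.syz (k - 1)) := by
  intro k hk2 hkp
  obtain ⟨m, rfl⟩ : ∃ m, k = m + 2 := ⟨k - 2, by omega⟩
  have hple : m + 4 ≤ p := by omega
  -- Deriving a contradiction if `Syz_{m+2}^R / x` were free over `R/(x)`.
  have hcontra : Module.Free (R ⧸ Ideal.span {x})
      ((res.syz (m + 2)) ⧸
        ((Ideal.span {x} : Ideal R) • (⊤ : Submodule R (res.syz (m + 2))))) → False := by
    intro hfree
    have hrange : LinearMap.range (res.d (m + 2)).hom = res.syz (m + 2) := res.range_d (m + 2)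
    set φ : (res.F (m + 3)) →ₗ[R] (res.syz (m + 2)) :=
      LinearMap.codRestrict _ (res.d (m + 2)).hom
        (fun c => hrange ▸ LinearMap.mem_range_self _ c) with hφdef
    have hφs : Function.Surjective φ := by
      rintro ⟨y, hy⟩
      rw [← hrange] at hy
      obtain ⟨z, hz⟩ := hy
      exact ⟨z, Subtype.ext hz⟩
    have hker : LinearMap.ker φ ≤ (maximalIdeal R) • (⊤ : Submodule R (res.F (m + 3))) := by
      rw [hφdef, LinearMap.ker_codRestrict]
      calc LinearMap.ker (res.d (m + 2)).hom = LinearMap.range (res.d (m + 3)).hom :=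
            LinearMap.exact_iff.mp (res.exact (m + 2))
        _ ≤ _ := res.min (m + 3)
    haveI := res.fin (m + 3)
    haveI := res.free (m + 2)
    have hregN : ∀ v : (res.syz (m + 2)), x • v = 0 → v = 0 :=
      reg_of_submodule_free hx _
    have hbot := ker_eq_bot_of_quot_free hxm hx hregN φ hφs hker hfree
    rw [hφdef, LinearMap.ker_codRestrict] at hbot
    have hsyzbot : res.syz (m + 3) = ⊥ := hbot
    have hsub := res.subsingleton_later (m + 2) hsyzbot p (by omega)
    haveI := htop
    exact false_of_nontrivial_of_subsingleton (res.F p)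
  by_cases h2 : Module.Free (R ⧸ Ideal.span {x}) (resb.syz (m + 1))
  · exfalso
    have hb : resb.syz (m + 2) = ⊥ := resb.syz_succ_eq_bot_of_free (m + 1) h2
    obtain ⟨e⟩ := hsplit (m + 3) (by omega) (by omega)
    haveI : Subsingleton (resb.syz (m + 2)) := by rw [hb]; infer_instance
    haveI h2' : Module.Free (R ⧸ Ideal.span {x}) (resb.syz (m + 3 - 2)) := h2
    haveI hss : Subsingleton (resb.syz (m + 3 - 1)) := ‹Subsingleton (resb.syz (m + 2))›
    exact hcontra (Module.Free.of_equiv e.symm)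
  · by_cases h1 : Module.Free (R ⧸ Ideal.span {x}) (resb.syz m)
    · exfalso
      have hb : resb.syz (m + 1) = ⊥ := resb.syz_succ_eq_bot_of_free m h1
      haveI : Subsingleton (resb.syz (m + 1)) := by rw [hb]; infer_instance
      exact h2 inferInstance
    · obtain ⟨e⟩ := hsplit (m + 2) (by omega) (by omega)
      have r1 := hsyzb (m + 1) (by omega) h1
      have r2 := hsyzb (m + 2) (by omega) h2
      have hcast : ((2 * (m + 2) - 1 : ℕ) : Cardinal) =
          ((m + 1 : ℕ) : Cardinal) + ((m + 2 : ℕ) : Cardinal) := by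
        rw [← Nat.cast_add]
        congr 1
        omega
      rw [hcast]
      haveI := res.free (m + 1)
      calc ((m + 1 : ℕ) : Cardinal) + ((m + 2 : ℕ) : Cardinal)
          ≤ Module.rank (R ⧸ Ideal.span {x}) (resb.syz m) +
            Module.rank (R ⧸ Ideal.span {x}) (resb.syz (m + 1)) := add_le_add r1 r2
        _ ≤ Module.rank (R ⧸ Ideal.span {x}) ((resb.syz m) × (resb.syz (m + 1))) :=
            rank_add_rank_le_rank_prod _ _
        _ = Module.rank (R ⧸ Ideal.span {x})
              ((res.syz (m + 1)) ⧸
                ((Ideal.span {x} : Ideal R) • (⊤ : Submodule R (res.syz (m + 1))))) :=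
            e.rank_eq.symm
        _ ≤ Module.rank R (res.syz (m + 1)) :=
            rank_quot_le hx hxu (reg_of_submodule_free hx _)
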